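/- arXiv:1702.02547 — 10 statements merged into one kernel-verified Lean document; each statement's English description precedes it below -/
import Mathlib

section
/- If π is a uniformly random permutation of [n] conditioned on π(x) = y, and z is drawn uniformly from [n] independently, then (y z) ∘ π is uniformly distributed over all of S_n. -/
/-- If π is uniform over permutations with π(x) = y, and z is uniform on [n]
independently, then (y z) ∘ π is uniform over all of S_n. -/
theorem stmt1 (n : ℕ) (x y : Fin n)
    (hS : (Finset.univ.filter fun π : Equiv.Perm (Fin n) => π x = y).Nonempty) :
    PMF.map (fun p : Equiv.Perm (Fin n) × Fin n => Equiv.swap y p.2 * p.1)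
      (PMF.uniformOfFinset
        ((Finset.univ.filter fun π : Equiv.Perm (Fin n) => π x = y) ×ˢ Finset.univ)
        (hS.product ⟨x, Finset.mem_univ x⟩))
    = PMF.uniformOfFinset Finset.univ ⟨1, Finset.mem_univ 1⟩ := by
  classical
  show PMF.map _ (PMF.uniformOfFinset _ (hS.product (Finset.univ_nonempty_iff.mpr ⟨x⟩))) =
    PMF.uniformOfFinset Finset.univ (Finset.univ_nonempty_iff.mpr ⟨1⟩)
  set S := (Finset.univ.filter fun π : Equiv.Perm (Fin n) => π x = y) with hSdef
  set T := S ×ˢ (Finset.univ : Finset (Fin n)) with hTdef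
  set f : Equiv.Perm (Fin n) × Fin n → Equiv.Perm (Fin n) :=
    fun p => Equiv.swap y p.2 * p.1 with hf
  -- cardinality equality via bijection
  have hcard : T.card = (Finset.univ : Finset (Equiv.Perm (Fin n))).card := by
    apply Finset.card_bij (fun p _ => f p)
    · intro p _; exact Finset.mem_univ _
    · rintro ⟨π, z⟩ hp ⟨π', z'⟩ hp' h
      simp only [hTdef, Finset.mem_product, hSdef, Finset.mem_filter] at hp hp'
      have hz : z = z' := by
        have := congrArg (fun σ : Equiv.Perm (Fin n) => σ x) h
        simp only [hf, Equiv.Perm.mul_apply, hp.1.2, hp'.1.2] at this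
        simpa using this
      subst hz
      have : π = π' := by
        have := h
        simp only [hf] at this
        exact mul_left_cancel this
      simp [this]
    · intro σ _
      refine ⟨(Equiv.swap y (σ x) * σ, σ x), ?_, ?_⟩
      · simp [hTdef, hSdef, Equiv.Perm.mul_apply]
      · simp [hf, ← mul_assoc]
  ext σ
  rw [PMF.map_apply, PMF.uniformOfFinset_apply, if_pos (Finset.mem_univ σ)]
  rw [tsum_eq_single (Equiv.swap y (σ x) * σ, σ x)]
  · have hfp : σ = f (Equiv.swap y (σ x) * σ, σ x) := by
      simp [hf, ← mul_assoc]
    rw [if_pos hfp, PMF.uniformOfFinset_apply]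
    have : (Equiv.swap y (σ x) * σ, σ x) ∈ T := by
      simp [hTdef, hSdef, Equiv.Perm.mul_apply]
    rw [if_pos this, hcard]
  · rintro ⟨π, z⟩ hne
    by_cases hσ : σ = f (π, z)
    · rw [if_pos hσ, PMF.uniformOfFinset_apply]
      by_cases hT : (π, z) ∈ T
      · exfalso
        apply hne
        simp only [hTdef, Finset.mem_product, hSdef, Finset.mem_filter] at hT
        have hz : z = σ x := by
          have := congrArg (fun σ : Equiv.Perm (Fin n) => σ x) hσ
          simp only [hf, Equiv.Perm.mul_apply, hT.1.2] at this
          simpa using this.symm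
        subst hz
        have hσ' : σ = Equiv.swap y (σ x) * π := hσ
        have hπ : π = Equiv.swap y (σ x) * σ := by
          have h2 := congrArg (fun τ => Equiv.swap y (σ x) * τ) hσ'
          simpa [← mul_assoc] using h2.symm
        simp [hπ]
      · rw [if_neg hT]
    · rw [if_neg hσ]
end

section
/- Let y1, y2 ∈ [n] with y1 ≠ y2. Then the set of products {(y2 z2)(y1 z1) : z1 ∈ [n] \ {y2}, z2 ∈ [n]} equals the set {(y1 z1')(y2 z2') : z1' ∈ [n], z2' ∈ [n] \ {y1}}, and each set has exactly n(n−1) distinct elements (each pair (z1, z2) in the given ranges yields a distinct permutation). -/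
lemma key_swap {α : Type*} [DecidableEq α] (a b x y : α) (hab : a ≠ b) (hxb : x ≠ b) :
    Equiv.swap b y * Equiv.swap a x =
    Equiv.swap a (if x = y then b else x) *
      Equiv.swap b (Equiv.swap a (if x = y then b else x) y) := by
  by_cases hxy : x = y
  · subst hxy
    simp only [if_pos rfl, if_true]
    by_cases hxa : x = a
    · subst hxa
      simp [Equiv.swap_self, Equiv.swap_apply_right, Equiv.swap_comm]
    · rw [show (Equiv.swap a b) x = x from
        Equiv.swap_apply_of_ne_of_ne hxa hxb]
      ext z
      simp only [Equiv.Perm.mul_apply, Equiv.swap_apply_def]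
      split_ifs <;> simp_all
  · rw [if_neg hxy]
    conv_rhs => rw [Equiv.mul_swap_eq_swap_mul]
    rw [Equiv.swap_apply_of_ne_of_ne (Ne.symm hab) (Ne.symm hxb),
      Equiv.swap_apply_self]

/-- For y1 ≠ y2: {(y2 z2)(y1 z1) : z1 ≠ y2, z2 ∈ [n]} = {(y1 z1')(y2 z2') :
z1' ∈ [n], z2' ≠ y1}, each set has n(n−1) elements, and each parameter pair
in the given ranges yields a distinct permutation. -/
theorem stmt5 (n : ℕ) (y1 y2 : Fin n) (h : y1 ≠ y2) :
    ((Finset.univ.filter (· ≠ y2)) ×ˢ (Finset.univ : Finset (Fin n))).image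
        (fun p : Fin n × Fin n => Equiv.swap y2 p.2 * Equiv.swap y1 p.1)
      = ((Finset.univ : Finset (Fin n)) ×ˢ (Finset.univ.filter (· ≠ y1))).image
        (fun p : Fin n × Fin n => Equiv.swap y1 p.1 * Equiv.swap y2 p.2)
    ∧ (((Finset.univ.filter (· ≠ y2)) ×ˢ (Finset.univ : Finset (Fin n))).image
        (fun p : Fin n × Fin n => Equiv.swap y2 p.2 * Equiv.swap y1 p.1)).card
      = n * (n - 1)
    ∧ Set.InjOn (fun p : Fin n × Fin n => Equiv.swap y2 p.2 * Equiv.swap y1 p.1)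
        ↑((Finset.univ.filter (· ≠ y2)) ×ˢ (Finset.univ : Finset (Fin n)))
    ∧ Set.InjOn (fun p : Fin n × Fin n => Equiv.swap y1 p.1 * Equiv.swap y2 p.2)
        ↑((Finset.univ : Finset (Fin n)) ×ˢ (Finset.univ.filter (· ≠ y1))) := by
  have hinj1 : Set.InjOn (fun p : Fin n × Fin n => Equiv.swap y2 p.2 * Equiv.swap y1 p.1)
      ↑((Finset.univ.filter (· ≠ y2)) ×ˢ (Finset.univ : Finset (Fin n))) := by
    intro p hp q hq hfq
    simp only [Finset.coe_product, Finset.coe_filter, Finset.mem_univ, true_and,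
      Set.mem_prod, Set.mem_setOf_eq, Set.mem_univ, and_true] at hp hq
    obtain ⟨hp1, -⟩ := hp
    obtain ⟨hq1, -⟩ := hq
    simp only at hfq
    have h2 : p.2 = q.2 := by
      have := congrArg (fun σ : Equiv.Perm (Fin n) => σ y2) hfq
      simpa [Equiv.Perm.mul_apply,
        Equiv.swap_apply_of_ne_of_ne (Ne.symm h) (Ne.symm hp1),
        Equiv.swap_apply_of_ne_of_ne (Ne.symm h) (Ne.symm hq1)] using this
    have h1 : Equiv.swap y1 p.1 = Equiv.swap y1 q.1 := by
      rw [h2] at hfq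
      exact mul_left_cancel hfq
    have := congrArg (fun σ : Equiv.Perm (Fin n) => σ y1) h1
    simp only [Equiv.swap_apply_left] at this
    exact Prod.ext this h2
  have hinj2 : Set.InjOn (fun p : Fin n × Fin n => Equiv.swap y1 p.1 * Equiv.swap y2 p.2)
      ↑((Finset.univ : Finset (Fin n)) ×ˢ (Finset.univ.filter (· ≠ y1))) := by
    intro p hp q hq hfq
    simp only [Finset.coe_product, Finset.coe_filter, Finset.mem_univ, true_and,
      Set.mem_prod, Set.mem_setOf_eq, Set.mem_univ, true_and] at hp hq
    obtain ⟨-, hp2⟩ := hp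
    obtain ⟨-, hq2⟩ := hq
    simp only at hfq
    have h1 : p.1 = q.1 := by
      have := congrArg (fun σ : Equiv.Perm (Fin n) => σ y1) hfq
      simpa [Equiv.Perm.mul_apply,
        Equiv.swap_apply_of_ne_of_ne h (Ne.symm hp2),
        Equiv.swap_apply_of_ne_of_ne h (Ne.symm hq2)] using this
    have h2 : Equiv.swap y2 p.2 = Equiv.swap y2 q.2 := by
      rw [h1] at hfq
      exact mul_left_cancel hfq
    have := congrArg (fun σ : Equiv.Perm (Fin n) => σ y2) h2
    simp only [Equiv.swap_apply_left] at this
    exact Prod.ext h1 this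
  refine ⟨?_, ?_, hinj1, hinj2⟩
  · ext σ
    simp only [Finset.mem_image, Finset.mem_product, Finset.mem_filter, Finset.mem_univ,
      true_and, and_true]
    constructor
    · rintro ⟨⟨z1, z2⟩, hz1, rfl⟩
      simp only at hz1 ⊢
      set x' := if z1 = z2 then y2 else z1 with hx'
      refine ⟨(x', Equiv.swap y1 x' z2), ?_, (key_swap y1 y2 z1 z2 h hz1).symm⟩
      -- need swap y1 x' z2 ≠ y1
      simp only
      intro hc
      have : z2 = x' := by
        have := congrArg (Equiv.swap y1 x') hc
        rwa [Equiv.swap_apply_self, Equiv.swap_apply_left] at this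
      by_cases hz : z1 = z2
      · rw [hx', if_pos hz] at this; exact hz1 (hz.trans this)
      · rw [hx', if_neg hz] at this; exact hz this.symm
    · rintro ⟨⟨z1, z2⟩, hz2, rfl⟩
      simp only at hz2 ⊢
      set x' := if z2 = z1 then y1 else z2 with hx'
      refine ⟨(Equiv.swap y2 x' z1, x'), ?_, (key_swap y2 y1 z2 z1 (Ne.symm h) hz2).symm⟩
      simp only
      intro hc
      have : z1 = x' := by
        have := congrArg (Equiv.swap y2 x') hc
        rwa [Equiv.swap_apply_self, Equiv.swap_apply_left] at this
      by_cases hz : z2 = z1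
      · rw [hx', if_pos hz] at this; exact hz2 (hz.trans this)
      · rw [hx', if_neg hz] at this; exact hz this.symm
  · rw [Finset.card_image_of_injOn hinj1, Finset.card_product,
      Finset.filter_ne', Finset.card_erase_of_mem (Finset.mem_univ _)]
    simp [Finset.card_univ, Nat.mul_comm]
end

section
/- Let y1, y2 ∈ [n] with y1 ≠ y2. If z1 is uniform on [n] \ {y2} and z2 is uniform on [n], independently, and if z1' is uniform on [n] and z2' is uniform on [n] \ {y1}, independently, then the random permutations (y2 z2)(y1 z1) and (y1 z1')(y2 z2') have the same distribution. -/
open Equiv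

theorem keyid {α : Type*} [DecidableEq α] (y1 y2 z1 z2 : α) (h : y1 ≠ y2) (h1 : z1 ≠ y2) :
    swap y2 z2 * swap y1 z1 =
      swap y1 (swap y2 z2 z1) * swap y2 (swap y1 (swap y2 z2 z1) z2) := by
  rcases eq_or_ne y1 z2 with rfl | h2
  · rcases eq_or_ne z1 y1 with rfl | h3
    · simp [swap_apply_left, swap_apply_right, swap_comm]
    · rw [swap_apply_of_ne_of_ne h1 h3, swap_apply_left,
        mul_swap_eq_swap_mul (swap y1 z1) y2 z1, swap_apply_of_ne_of_ne (Ne.symm h) h1.symm,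
        swap_apply_right]
  · have hy1 : swap y2 z2 y1 = y1 := swap_apply_of_ne_of_ne h h2
    have hz2 : swap y1 (swap y2 z2 z1) z2 = z2 := by
      apply swap_apply_of_ne_of_ne (Ne.symm h2)
      intro hc
      apply h1
      have := congrArg (swap y2 z2) hc
      simpa using this.symm
    rw [hz2, mul_swap_eq_swap_mul (swap y2 z2) y1 z1, hy1]

theorem memb {α : Type*} [DecidableEq α] (y1 y2 z1 z2 : α) (h : y1 ≠ y2) :
    swap y1 (swap y2 z2 z1) z2 = y1 ↔ z1 = y2 := by
  constructor
  · intro hc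
    have h2 : z2 = swap y2 z2 z1 := by
      have := congrArg (swap y1 (swap y2 z2 z1)) hc
      rw [Equiv.swap_apply_self, swap_apply_left] at this
      exact this
    have := congrArg (swap y2 z2) h2
    rw [Equiv.swap_apply_self, swap_apply_right] at this
    exact this.symm
  · rintro rfl
    simp [swap_apply_right, swap_apply_left, h]

-- the global bijection
def phi {α : Type*} [DecidableEq α] (y1 y2 : α) : α × α ≃ α × α where
  toFun p := (swap y2 p.2 p.1, swap y1 (swap y2 p.2 p.1) p.2)
  invFun q := (swap y2 (swap y1 q.1 q.2) q.1, swap y1 q.1 q.2)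
  left_inv p := by simp [Equiv.swap_apply_self]
  right_inv q := by simp [Equiv.swap_apply_self]

theorem map_congr' {α β : Type*} (p : PMF α) (f g : α → β)
    (hfg : ∀ a ∈ p.support, f a = g a) : p.map f = p.map g := by
  ext b
  rw [PMF.map_apply, PMF.map_apply]
  refine tsum_congr fun a => ?_
  by_cases hp : p a = 0
  · simp [hp]
  · rw [hfg a hp]

theorem map_equiv_uniform {α β : Type*} (e : α ≃ β) (s : Finset α) (t : Finset β)
    (hs : s.Nonempty) (ht : t.Nonempty) (hmem : ∀ a, a ∈ s ↔ e a ∈ t) :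
    PMF.map e (PMF.uniformOfFinset s hs) = PMF.uniformOfFinset t ht := by
  have hcard : s.card = t.card := by
    refine Finset.card_bij (fun a _ => e a) (fun a ha => (hmem a).1 ha)
      (fun a _ b _ hab => e.injective hab) (fun b hb => ⟨e.symm b, ?_, by simp⟩)
    rw [hmem]; simpa using hb
  ext b
  rw [PMF.map_apply, tsum_eq_single (e.symm b) (fun a ha => by
    rw [if_neg]; intro hc; exact ha (by simp [hc]))]
  simp only [Equiv.apply_symm_apply, if_true, PMF.uniformOfFinset_apply, hcard]
  have : e.symm b ∈ s ↔ b ∈ t := by rw [hmem, Equiv.apply_symm_apply]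
  classical
  split_ifs with h1 h2 <;> tauto


/-- For y1 ≠ y2: with z1 uniform on [n] \ {y2}, z2 uniform on [n] (independent),
and z1' uniform on [n], z2' uniform on [n] \ {y1} (independent), the random
permutations (y2 z2)(y1 z1) and (y1 z1')(y2 z2') have the same distribution. -/
theorem stmt6 (n : ℕ) (y1 y2 : Fin n) (h : y1 ≠ y2) :
    PMF.map (fun p : Fin n × Fin n => Equiv.swap y2 p.2 * Equiv.swap y1 p.1)
      (PMF.uniformOfFinset ((Finset.univ.filter (· ≠ y2)) ×ˢ Finset.univ)
        (Finset.Nonempty.product ⟨y1, by simp [h]⟩ ⟨y1, Finset.mem_univ y1⟩))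
    = PMF.map (fun p : Fin n × Fin n => Equiv.swap y1 p.1 * Equiv.swap y2 p.2)
      (PMF.uniformOfFinset (Finset.univ ×ˢ (Finset.univ.filter (· ≠ y1)))
        (Finset.Nonempty.product ⟨y2, Finset.mem_univ y2⟩ ⟨y2, by simp [h.symm]⟩)) := by
  set s : Finset (Fin n × Fin n) := (Finset.univ.filter (· ≠ y2)) ×ˢ Finset.univ with hsdef
  set t : Finset (Fin n × Fin n) := Finset.univ ×ˢ (Finset.univ.filter (· ≠ y1)) with htdef
  have hs : s.Nonempty := Finset.Nonempty.product ⟨y1, by simp [h]⟩ ⟨y1, Finset.mem_univ y1⟩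
  have ht : t.Nonempty := Finset.Nonempty.product ⟨y2, Finset.mem_univ y2⟩ ⟨y2, by simp [h.symm]⟩
  have hmem : ∀ p : Fin n × Fin n, p ∈ s ↔ phi y1 y2 p ∈ t := by
    intro p
    simp only [hsdef, htdef, Finset.mem_product, Finset.mem_filter, Finset.mem_univ,
      true_and, and_true, phi]
    simp only [Equiv.coe_fn_mk]
    rw [not_iff_not.symm, not_not, not_not, memb _ _ _ _ h]
  have step1 : PMF.map (fun p : Fin n × Fin n => Equiv.swap y2 p.2 * Equiv.swap y1 p.1)
      (PMF.uniformOfFinset s hs)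
      = PMF.map ((fun q : Fin n × Fin n => Equiv.swap y1 q.1 * Equiv.swap y2 q.2) ∘ phi y1 y2)
      (PMF.uniformOfFinset s hs) := by
    apply map_congr'
    intro p hp
    rw [PMF.mem_support_uniformOfFinset_iff] at hp
    have hp1 : p.1 ≠ y2 := by
      simp only [hsdef, Finset.mem_product, Finset.mem_filter] at hp
      exact hp.1.2
    simpa [phi] using keyid y1 y2 p.1 p.2 h hp1
  rw [step1, ← PMF.map_comp, map_equiv_uniform (phi y1 y2) s t hs ht hmem]
end

section
/- Let x1, ..., xk be distinct elements of [n], and define T({x1,...,xk}) = { (xk zk)···(x1 z1) : z_i ∈ [n] \ {x_i, ..., x_k} for each i }. Then the set T({x1,...,xk}) is invariant under permuting the order of x1, ..., xk. -/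
open Equiv

/-- Products of two equal adjacent pairs give equal list products. -/
private lemma prod_aux {M : Type*} [Monoid M] {k : ℕ} (f g : Fin k → M) (i : ℕ)
    (h1 : i + 1 < k)
    (hfg : ∀ j : Fin k, (j : ℕ) ≠ i → (j : ℕ) ≠ i + 1 → f j = g j)
    (hpair : f ⟨i + 1, h1⟩ * f ⟨i, by omega⟩ = g ⟨i + 1, h1⟩ * g ⟨i, by omega⟩) :
    (List.ofFn f).reverse.prod = (List.ofFn g).reverse.prod := by
  have key : ∀ h : Fin k → M,
      List.ofFn h = (List.ofFn h).take i ++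
        h ⟨i, by omega⟩ :: h ⟨i + 1, h1⟩ :: (List.ofFn h).drop (i + 2) := by
    intro h
    conv_lhs => rw [← List.take_append_drop i (List.ofFn h)]
    congr 1
    rw [List.drop_eq_getElem_cons (by simp; omega)]
    congr 1
    · simp
    · rw [List.drop_eq_getElem_cons (by simp; omega)]
      simp
  have htake : (List.ofFn f).take i = (List.ofFn g).take i := by
    apply List.ext_getElem (by simp)
    intro m hm1 hm2
    have hmi : m < i := by
      have := hm1; simp at this; omega
    rw [List.getElem_take, List.getElem_take, List.getElem_ofFn, List.getElem_ofFn]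
    exact hfg _ (by simp; omega) (by simp; omega)
  have hdrop : (List.ofFn f).drop (i + 2) = (List.ofFn g).drop (i + 2) := by
    apply List.ext_getElem (by simp)
    intro m hm1 hm2
    rw [List.getElem_drop, List.getElem_drop, List.getElem_ofFn, List.getElem_ofFn]
    exact hfg _ (by simp; omega) (by simp; omega)
  rw [key f, key g, htake, hdrop]
  simp only [List.reverse_append, List.reverse_cons, List.append_assoc, List.prod_append,
    List.prod_cons, List.prod_nil, List.singleton_append]
  rw [← mul_assoc (f ⟨i+1, h1⟩), hpair]
  simp [mul_assoc]

/-- The key transposition identity. -/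
private lemma swap_key {α : Type*} [DecidableEq α] {a b u v : α} (hab : a ≠ b) (hua : u ≠ a)
    (hub : u ≠ b) (hvb : v ≠ b) :
    Equiv.swap a (if v = u then b else u) * Equiv.swap b (if v = a then u else v)
      = Equiv.swap b v * Equiv.swap a u := by
  ext w
  simp only [Equiv.Perm.mul_apply, Equiv.swap_apply_def]
  split_ifs <;> grind

private def Pset {n k : ℕ} (x : Fin k → Fin n) : Set (Equiv.Perm (Fin n)) :=
  {σ | ∃ z : Fin k → Fin n,
      (∀ i j : Fin k, i ≤ j → z i ≠ x j) ∧
      σ = ((List.ofFn fun i => Equiv.swap (x i) (z i)).reverse).prod}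

private lemma step {n k : ℕ} (x : Fin k → Fin n) (hx : Function.Injective x) (i : ℕ)
    (h1 : i + 1 < k) :
    Pset x ⊆ Pset (x ∘ Equiv.swap ⟨i, by omega⟩ ⟨i + 1, h1⟩) := by
  rintro σ ⟨z, hz, rfl⟩
  set I : Fin k := ⟨i, by omega⟩ with hI
  set I1 : Fin k := ⟨i + 1, h1⟩ with hI1
  have hII1 : I ≠ I1 := by simp [hI, hI1, Fin.ext_iff]
  set a := x I with ha
  set b := x I1 with hb
  set u := z I with hu
  set v := z I1 with hv
  have hab : a ≠ b := fun h => hII1 (hx h)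
  have hua : u ≠ a := hz I I le_rfl
  have hub : u ≠ b := hz I I1 (by simp [hI, hI1, Fin.le_def])
  have hvb : v ≠ b := hz I1 I1 le_rfl
  set z' : Fin k → Fin n :=
    Function.update (Function.update z I (if v = a then u else v)) I1 (if v = u then b else u)
    with hz'
  have hz'I : z' I = (if v = a then u else v) := by
    rw [hz', Function.update_of_ne hII1, Function.update_self]
  have hz'I1 : z' I1 = (if v = u then b else u) := by
    rw [hz', Function.update_self]
  have hz'other : ∀ j, j ≠ I → j ≠ I1 → z' j = z j := by
    intro j hj hj1
    rw [hz', Function.update_of_ne hj1, Function.update_of_ne hj]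
  have hsI : Equiv.swap I I1 I = I1 := Equiv.swap_apply_left _ _
  have hsI1 : Equiv.swap I I1 I1 = I := Equiv.swap_apply_right _ _
  have hsother : ∀ j, j ≠ I → j ≠ I1 → Equiv.swap I I1 j = j := fun j hj hj1 =>
    Equiv.swap_apply_of_ne_of_ne hj hj1
  refine ⟨z', ?_, ?_⟩
  · -- constraints
    have hIval : (I : ℕ) = i := rfl
    have hI1val : (I1 : ℕ) = i + 1 := rfl
    have hIleI1 : I ≤ I1 := by rw [Fin.le_def, hIval, hI1val]; omega
    intro p q hpq
    rcases eq_or_ne q I with rfl | hqI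
    · -- x' q = b
      rw [Function.comp_apply, hsI, ← hb]
      rcases eq_or_ne p I with rfl | hpI
      · rw [hz'I]; split_ifs <;> assumption
      · have hpI1 : p ≠ I1 := by
          rintro rfl
          have := Fin.le_def.mp hpq
          rw [hIval, hI1val] at this
          omega
        rw [hz'other p hpI hpI1]
        exact hz p I1 (le_trans hpq hIleI1)
    rcases eq_or_ne q I1 with rfl | hqI1
    · -- x' q = a
      rw [Function.comp_apply, hsI1, ← ha]
      rcases eq_or_ne p I with rfl | hpI
      · rw [hz'I]; split_ifs with h
        · exact hua
        · exact h
      rcases eq_or_ne p I1 with rfl | hpI1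
      · rw [hz'I1]; split_ifs with h
        · exact hab.symm
        · exact hua
      · rw [hz'other p hpI hpI1]
        refine hz p I ?_
        have h1' := Fin.le_def.mp hpq
        rw [hI1val] at h1'
        have h2' : (p : ℕ) ≠ i + 1 := fun h => hpI1 (Fin.ext (h.trans hI1val.symm))
        rw [Fin.le_def, hIval]
        omega
    · -- x' q = x q, with q ∉ {I, I1}
      rw [Function.comp_apply, hsother q hqI hqI1]
      rcases eq_or_ne p I with rfl | hpI
      · have hIq : I1 ≤ q := by
          have h1' := Fin.le_def.mp hpq
          rw [hIval] at h1'
          have h2' : (q : ℕ) ≠ i := fun h => hqI (Fin.ext (h.trans hIval.symm))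
          rw [Fin.le_def, hI1val]
          omega
        rw [hz'I]; split_ifs
        · exact hz I q (le_trans hIleI1 hIq)
        · exact hz I1 q hIq
      rcases eq_or_ne p I1 with rfl | hpI1
      · rw [hz'I1]; split_ifs
        · exact fun h => hqI1 (hx h.symm)
        · exact hz I q (le_trans hIleI1 hpq)
      · rw [hz'other p hpI hpI1]
        exact hz p q hpq
  · -- product equality
    apply prod_aux _ _ i h1
    · intro j hji hji1
      have hjI : j ≠ I := by simp [hI, Fin.ext_iff]; exact hji
      have hjI1 : j ≠ I1 := by simp [hI1, Fin.ext_iff]; exact hji1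
      rw [Function.comp_apply, hsother j hjI hjI1, hz'other j hjI hjI1]
    · show Equiv.swap (x I1) (z I1) * Equiv.swap (x I) (z I) =
        Equiv.swap (x (Equiv.swap I I1 I1)) (z' I1) * Equiv.swap (x (Equiv.swap I I1 I)) (z' I)
      rw [hsI, hsI1, hz'I, hz'I1, ← ha, ← hb, ← hu, ← hv]
      exact (swap_key hab hua hub hvb).symm

private lemma pset_swap {n k : ℕ} (x : Fin k → Fin n) (hx : Function.Injective x) (i : ℕ)
    (h1 : i + 1 < k) :
    Pset x = Pset (x ∘ Equiv.swap ⟨i, by omega⟩ ⟨i + 1, h1⟩) := by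
  apply le_antisymm (step x hx i h1)
  have h2 := step (x ∘ Equiv.swap ⟨i, by omega⟩ ⟨i + 1, h1⟩) (hx.comp (Equiv.injective _)) i h1
  have : (x ∘ Equiv.swap ⟨i, by omega⟩ ⟨i + 1, h1⟩) ∘ Equiv.swap ⟨i, by omega⟩ ⟨i + 1, h1⟩ = x := by
    funext j
    simp [Function.comp_apply, Equiv.swap_apply_self]
  rwa [this] at h2

private lemma pset_perm {n k : ℕ} (ρ : Equiv.Perm (Fin k)) :
    ∀ (x : Fin k → Fin n), Function.Injective x → Pset x = Pset (x ∘ ρ) := by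
  rcases Nat.eq_zero_or_pos k with rfl | hk
  · intro x hx
    have : ρ = 1 := Subsingleton.elim _ _
    subst this
    rfl
  obtain ⟨m, rfl⟩ : ∃ m, k = m + 1 := ⟨k - 1, by omega⟩
  have hρ : ρ ∈ Submonoid.closure (Set.range fun i : Fin m => Equiv.swap i.castSucc i.succ) := by
    rw [Equiv.Perm.mclosure_swap_castSucc_succ]; trivial
  induction hρ using Submonoid.closure_induction with
  | mem s hs =>
    obtain ⟨j, rfl⟩ := hs
    intro x hx
    exact pset_swap x hx j (by omega)
  | one =>
    intro x hx
    have : x ∘ ⇑(1 : Equiv.Perm (Fin (m + 1))) = x := rfl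
    rw [this]
  | mul ρ₁ ρ₂ h₁ h₂ ih₁ ih₂ =>
    intro x hx
    have : x ∘ ⇑(ρ₁ * ρ₂) = (x ∘ ρ₁) ∘ ρ₂ := rfl
    rw [this, ih₁ x hx, ih₂ (x ∘ ρ₁) (hx.comp ρ₁.injective)]

/-- The set T({x1,...,xk}) = { (xk zk)···(x1 z1) : z_i ∉ {x_i,...,x_k} } is
invariant under permuting the order of the distinct elements x1, ..., xk. -/
theorem stmt8 (n k : ℕ) (x : Fin k → Fin n) (hx : Function.Injective x)
    (ρ : Equiv.Perm (Fin k)) :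
    {σ : Equiv.Perm (Fin n) | ∃ z : Fin k → Fin n,
        (∀ i j : Fin k, i ≤ j → z i ≠ x j) ∧
        σ = ((List.ofFn fun i => Equiv.swap (x i) (z i)).reverse).prod}
    = {σ : Equiv.Perm (Fin n) | ∃ z : Fin k → Fin n,
        (∀ i j : Fin k, i ≤ j → z i ≠ x (ρ j)) ∧
        σ = ((List.ofFn fun i => Equiv.swap (x (ρ i)) (z i)).reverse).prod} := by
  exact pset_perm ρ x hx
end

section
/- Let x1, ..., xk be distinct elements of [n]. For any σ ∈ T({x1,...,xk}) there is exactly one tuple (z1,...,zk) with z_i ∈ [n] \ {x_i,...,x_k} such that σ = (xk zk)···(x1 z1). -/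
lemma prod_fix_aux {n : ℕ} (l : List (Equiv.Perm (Fin n))) (a : Fin n)
    (h : ∀ p ∈ l, p a = a) : l.prod a = a := by
  induction l with
  | nil => rfl
  | cons p l ih =>
    rw [List.prod_cons, Equiv.Perm.mul_apply, ih (fun q hq => h q (List.mem_cons_of_mem _ hq)),
      h p List.mem_cons_self]

lemma uniq_aux {n : ℕ} : ∀ (k : ℕ) (x : Fin k → Fin n), Function.Injective x →
    ∀ z z' : Fin k → Fin n,
    (∀ i j : Fin k, i ≤ j → z i ≠ x j) →
    (∀ i j : Fin k, i ≤ j → z' i ≠ x j) →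
    ((List.ofFn fun i => Equiv.swap (x i) (z i)).reverse).prod =
      ((List.ofFn fun i => Equiv.swap (x i) (z' i)).reverse).prod → z = z' := by
  intro k
  induction k with
  | zero => intro x _ z z' _ _ _; funext i; exact absurd i.2 (by omega)
  | succ k ih =>
    intro x hx z z' hz hz' heq
    have hcast : ∀ (w : Fin (k+1) → Fin n),
        ((List.ofFn fun i : Fin (k+1) => Equiv.swap (x i) (w i)).reverse).prod =
        Equiv.swap (x (Fin.last k)) (w (Fin.last k)) *
        ((List.ofFn fun i : Fin k => Equiv.swap (x i.castSucc) (w i.castSucc)).reverse).prod := by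
      intro w
      rw [List.ofFn_succ', List.concat_eq_append, List.reverse_append, List.reverse_singleton,
        List.singleton_append, List.prod_cons]
    have hfix : ∀ (w : Fin (k+1) → Fin n), (∀ i j : Fin (k+1), i ≤ j → w i ≠ x j) →
        ((List.ofFn fun i : Fin k => Equiv.swap (x i.castSucc) (w i.castSucc)).reverse).prod
          (x (Fin.last k)) = x (Fin.last k) := by
      intro w hw
      apply prod_fix_aux
      intro p hp
      rw [List.mem_reverse, List.mem_ofFn] at hp
      obtain ⟨i, rfl⟩ := hp
      apply Equiv.swap_apply_of_ne_of_ne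
      · exact fun h => absurd (hx h) (Fin.ne_last_of_lt (Fin.castSucc_lt_last i)).symm
      · exact (hw i.castSucc (Fin.last k) (Fin.le_last _)).symm
    have hzlast : z (Fin.last k) = z' (Fin.last k) := by
      have h1 := congrArg (fun p : Equiv.Perm (Fin n) => p (x (Fin.last k))) heq
      simp only [hcast z, hcast z', Equiv.Perm.mul_apply, hfix z hz, hfix z' hz',
        Equiv.swap_apply_left] at h1
      exact h1
    have hP : ((List.ofFn fun i : Fin k => Equiv.swap (x i.castSucc) (z i.castSucc)).reverse).prod =
        ((List.ofFn fun i : Fin k => Equiv.swap (x i.castSucc) (z' i.castSucc)).reverse).prod := by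
      have := heq
      rw [hcast z, hcast z', hzlast] at this
      exact mul_left_cancel this
    have hrest := ih (fun i => x i.castSucc)
      (fun a b h => Fin.castSucc_injective k (hx h))
      (fun i => z i.castSucc) (fun i => z' i.castSucc)
      (fun i j hij => hz i.castSucc j.castSucc (by simpa using hij))
      (fun i j hij => hz' i.castSucc j.castSucc (by simpa using hij)) hP
    funext i
    refine Fin.lastCases hzlast (fun j => ?_) i
    exact congrFun hrest j

/-- For any σ ∈ T({x1,...,xk}) there is exactly one tuple (z1,...,zk) with
z_i ∉ {x_i,...,x_k} such that σ = (xk zk)···(x1 z1). -/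
theorem stmt9 (n k : ℕ) (x : Fin k → Fin n) (hx : Function.Injective x)
    (σ : Equiv.Perm (Fin n))
    (hσ : ∃ z : Fin k → Fin n, (∀ i j : Fin k, i ≤ j → z i ≠ x j) ∧
      σ = ((List.ofFn fun i => Equiv.swap (x i) (z i)).reverse).prod) :
    ∃! z : Fin k → Fin n, (∀ i j : Fin k, i ≤ j → z i ≠ x j) ∧
      σ = ((List.ofFn fun i => Equiv.swap (x i) (z i)).reverse).prod := by
  obtain ⟨z, hz1, hz2⟩ := hσ
  exact ⟨z, ⟨hz1, hz2⟩, fun z' ⟨hz1', hz2'⟩ =>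
    uniq_aux k x hx z' z hz1' hz1 (hz2'.symm.trans hz2)⟩
end

section
/- Let x1, ..., xk be distinct elements of [n]. Then |T({x1,...,xk})| = (n−1)!/(n−k−1)!. -/
section Aux

variable {G : Type*} [Monoid G]

/-- Product `s (t-1) * ⋯ * s 1 * s 0`. -/
def prodBelow (s : ℕ → G) : ℕ → G
  | 0 => 1
  | m + 1 => s m * prodBelow s m

lemma prodBelow_congr {s s' : ℕ → G} : ∀ {t : ℕ}, (∀ m < t, s m = s' m) →
    prodBelow s t = prodBelow s' t
  | 0, _ => rfl
  | t + 1, h => by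
      simp only [prodBelow]
      rw [h t (Nat.lt_succ_self t), prodBelow_congr (fun m hm => h m (hm.trans (Nat.lt_succ_self t)))]

lemma prodBelow_add (s : ℕ → G) (a : ℕ) : ∀ b : ℕ,
    prodBelow s (a + b) = prodBelow (fun i => s (a + i)) b * prodBelow s a
  | 0 => by simp [prodBelow]
  | b + 1 => by
      show prodBelow s (a + b + 1) = _
      rw [prodBelow, prodBelow_add s a b, prodBelow, mul_assoc]

lemma ofFn_reverse_prod : ∀ {k : ℕ} (g : Fin k → G),
    (List.ofFn g).reverse.prod =
      prodBelow (fun m => if h : m < k then g ⟨m, h⟩ else 1) k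
  | 0, g => by simp [prodBelow]
  | k + 1, g => by
      rw [List.ofFn_succ' g, List.concat_eq_append, List.reverse_append, List.reverse_singleton,
        List.singleton_append, List.prod_cons, ofFn_reverse_prod (fun i => g i.castSucc)]
      show _ = prodBelow _ (k+1)
      rw [prodBelow]
      simp only [Nat.lt_succ_self, dif_pos]
      congr 1
      apply prodBelow_congr
      intro m hm
      simp only [hm, hm.trans (Nat.lt_succ_self k), dif_pos]
      rfl

lemma prodBelow_apply_fixed {α : Type*} {s : ℕ → Equiv.Perm α} {c : α} :
    ∀ {t : ℕ}, (∀ m < t, s m c = c) → prodBelow s t c = c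
  | 0, _ => rfl
  | t + 1, h => by
      show (s t * prodBelow s t) c = c
      rw [Equiv.Perm.mul_apply,
        prodBelow_apply_fixed (fun m hm => h m (hm.trans (Nat.lt_succ_self t))),
        h t (Nat.lt_succ_self t)]

end Aux

/-- |T({x1,...,xk})| = (n−1)!/(n−k−1)!, for distinct x1,...,xk with k ≤ n−1. -/
theorem stmt10 (n k : ℕ) (hk : k ≤ n - 1) (x : Fin k → Fin n)
    (hx : Function.Injective x) :
    Set.ncard {σ : Equiv.Perm (Fin n) | ∃ z : Fin k → Fin n,
        (∀ i j : Fin k, i ≤ j → z i ≠ x j) ∧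
        σ = ((List.ofFn fun i => Equiv.swap (x i) (z i)).reverse).prod}
      = (n - 1).factorial / (n - k - 1).factorial := by
  -- the family of swaps determined by z
  set s : (Fin k → Fin n) → ℕ → Equiv.Perm (Fin n) := fun z m =>
    if h : m < k then Equiv.swap (x ⟨m, h⟩) (z ⟨m, h⟩) else 1 with hs
  set Z : Set (Fin k → Fin n) := {z | ∀ i j : Fin k, i ≤ j → z i ≠ x j} with hZ
  set F : (Fin k → Fin n) → Equiv.Perm (Fin n) := fun z =>
    ((List.ofFn fun i => Equiv.swap (x i) (z i)).reverse).prod with hF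
  have hFeq : ∀ z, F z = prodBelow (s z) k := fun z => ofFn_reverse_prod _
  -- key fixed point fact: the product of the first m swaps fixes x j for m ≤ j
  have hfix : ∀ z ∈ Z, ∀ (j : Fin k) (m : ℕ), m ≤ (j : ℕ) →
      prodBelow (s z) m (x j) = x j := by
    intro z hz j m hm
    apply prodBelow_apply_fixed
    intro m' hm'
    have hm'k : m' < k := lt_of_lt_of_le (hm'.trans_le hm) j.isLt.le
    have h1 : x ⟨m', hm'k⟩ ≠ x j := fun h => by
      have : m' = (j : ℕ) := congrArg Fin.val (hx h)
      omega
    have h2 : z ⟨m', hm'k⟩ ≠ x j := hz ⟨m', hm'k⟩ j (by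
      rw [Fin.le_def]; show m' ≤ (j : ℕ); omega)
    simp only [hs, hm'k, dif_pos]
    exact Equiv.swap_apply_of_ne_of_ne (Ne.symm h1) (Ne.symm h2)
  -- the value z j is recoverable
  have hval : ∀ z ∈ Z, ∀ (j : Fin k),
      prodBelow (s z) ((j : ℕ) + 1) (x j) = z j := by
    intro z hz j
    show (s z j * prodBelow (s z) j) (x j) = z j
    rw [Equiv.Perm.mul_apply, hfix z hz j j le_rfl]
    simp only [hs, j.isLt, dif_pos]
    simp [Equiv.swap_apply_left]
  -- injectivity on Z
  have hinj : Set.InjOn F Z := by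
    intro z hz z' hz' heq
    rw [hFeq, hFeq] at heq
    have key : ∀ d : ℕ, ∀ j : Fin k, k - d ≤ (j : ℕ) → z j = z' j := by
      intro d
      induction d with
      | zero => intro j hj; exact absurd j.isLt (by omega)
      | succ d ih =>
        intro j hj
        by_cases hcase : k - d ≤ (j : ℕ)
        · exact ih j hcase
        -- all later swaps agree
        have hagree : ∀ m, (j : ℕ) + 1 ≤ m → s z m = s z' m := by
          intro m hm
          by_cases hmk : m < k
          · have : z ⟨m, hmk⟩ = z' ⟨m, hmk⟩ := ih ⟨m, hmk⟩ (by simp; omega)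
            simp only [hs, hmk, dif_pos, this]
          · simp only [hs, hmk, dif_neg, not_false_iff]
        have hsplit : prodBelow (s z) ((j : ℕ) + 1) = prodBelow (s z') ((j : ℕ) + 1) := by
          have hk' : ((j : ℕ) + 1) + (k - ((j : ℕ) + 1)) = k := by omega
          have e1 : prodBelow (s z) k =
              prodBelow (fun i => s z ((j : ℕ) + 1 + i)) (k - ((j : ℕ) + 1)) *
                prodBelow (s z) ((j : ℕ) + 1) := by
            have := prodBelow_add (s z) ((j : ℕ) + 1) (k - ((j : ℕ) + 1))
            rwa [hk'] at this
          have e2 : prodBelow (s z') k =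
              prodBelow (fun i => s z' ((j : ℕ) + 1 + i)) (k - ((j : ℕ) + 1)) *
                prodBelow (s z') ((j : ℕ) + 1) := by
            have := prodBelow_add (s z') ((j : ℕ) + 1) (k - ((j : ℕ) + 1))
            rwa [hk'] at this
          rw [e1, e2] at heq
          have hsh : prodBelow (fun i => s z ((j : ℕ) + 1 + i)) (k - ((j : ℕ) + 1)) =
              prodBelow (fun i => s z' ((j : ℕ) + 1 + i)) (k - ((j : ℕ) + 1)) := by
            apply prodBelow_congr
            intro m _
            exact hagree _ (by omega)
          rw [hsh] at heq
          exact mul_left_cancel heq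
        have := hval z hz j
        rw [hsplit, hval z' hz' j] at this
        exact this.symm
      
    refine funext fun j => key k j (by omega)
  -- the set is the image of Z under F
  have hset : {σ : Equiv.Perm (Fin n) | ∃ z : Fin k → Fin n,
        (∀ i j : Fin k, i ≤ j → z i ≠ x j) ∧
        σ = ((List.ofFn fun i => Equiv.swap (x i) (z i)).reverse).prod} = F '' Z := by
    ext σ
    constructor
    · rintro ⟨z, h1, h2⟩; exact ⟨z, h1, h2.symm⟩
    · rintro ⟨z, h1, h2⟩; exact ⟨z, h1, h2.symm⟩
  rw [hset, Set.ncard_image_of_injOn hinj]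
  -- now count Z
  classical
  set t : Fin k → Finset (Fin n) := fun i =>
    Finset.univ \ Finset.image x (Finset.Ici i) with ht
  have hZfin : Z = ↑(Fintype.piFinset t) := by
    ext z
    simp only [hZ, Set.mem_setOf_eq, Finset.coe_sort_coe, Finset.mem_coe,
      Fintype.mem_piFinset, ht, Finset.mem_sdiff, Finset.mem_univ, true_and,
      Finset.mem_image, Finset.mem_Ici, not_exists, not_and]
    constructor
    · intro h i j hij hzj; exact h i j hij hzj.symm
    · intro h i j hij hzj; exact h i j hij hzj.symm
  rw [hZfin, Set.ncard_coe_finset, Fintype.card_piFinset]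
  have hcard : ∀ i : Fin k, (t i).card = n - (k - (i : ℕ)) := by
    intro i
    rw [ht]
    rw [Finset.card_sdiff_of_subset (Finset.subset_univ _), Finset.card_univ, Fintype.card_fin,
      Finset.card_image_of_injective _ hx, Fin.card_Ici]
  calc (∏ i : Fin k, (t i).card) = ∏ i : Fin k, (n - (k - (i : ℕ))) := by
        exact Finset.prod_congr rfl fun i _ => hcard i
    _ = ∏ i ∈ Finset.range k, (n - (k - i)) := Fin.prod_univ_eq_prod_range (fun i => n - (k - i)) k
    _ = ∏ i ∈ Finset.range k, (n - 1 - (k - 1 - i)) := by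
        apply Finset.prod_congr rfl
        intro i hi
        simp only [Finset.mem_range] at hi
        omega
    _ = ∏ i ∈ Finset.range k, (n - 1 - i) := Finset.prod_range_reflect (fun i => n - 1 - i) k
    _ = (n - 1).descFactorial k := (Nat.descFactorial_eq_prod_range (n - 1) k).symm
    _ = (n - 1).factorial / (n - 1 - k).factorial := Nat.descFactorial_eq_div hk
    _ = (n - 1).factorial / (n - k - 1).factorial := by rw [Nat.sub_sub, Nat.sub_sub, Nat.add_comm]
end

section
/- Let x1, ..., x_{k-1} be distinct elements of [n] and b ∈ [n] \ {x1,...,x_{k-1}}. Let σ = (x_{k-1} z_{k-1})···(x1 z1) where each z_i ∈ [n] \ {x_i,...,x_{k-1}}. Then σ(b) = b if and only if z1, ..., z_{k-1} are all distinct from b. -/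
theorem aux11 (n : ℕ) : ∀ (m : ℕ) (x z : Fin m → Fin n), Function.Injective x →
    ∀ b : Fin n, b ∉ Set.range x →
    (∀ i j : Fin m, i ≤ j → z i ≠ x j) →
    (((List.ofFn fun i => Equiv.swap (x i) (z i)).reverse).prod b = b ∧ ∀ i, z i ≠ b)
    ∨ ((∃ t, ((List.ofFn fun i => Equiv.swap (x i) (z i)).reverse).prod b = x t) ∧ ∃ i, z i = b) := by
  intro m
  induction m with
  | zero => intro x z _ b _ _; left; simp
  | succ m ih =>
    intro x z hx b hb hz
    have hrw : ((List.ofFn fun i : Fin (m+1) => Equiv.swap (x i) (z i)).reverse).prod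
        = Equiv.swap (x (Fin.last m)) (z (Fin.last m)) *
          ((List.ofFn fun i : Fin m => Equiv.swap (x i.castSucc) (z i.castSucc)).reverse).prod := by
      rw [List.ofFn_succ' (fun i : Fin (m+1) => Equiv.swap (x i) (z i))]
      simp [List.concat_eq_append]
    have hx' : Function.Injective (x ∘ Fin.castSucc) :=
      hx.comp (Fin.castSucc_injective m)
    have hb' : b ∉ Set.range (x ∘ Fin.castSucc) := by
      rintro ⟨t, ht⟩; exact hb ⟨t.castSucc, ht⟩
    have hz' : ∀ i j : Fin m, i ≤ j → (z ∘ Fin.castSucc) i ≠ (x ∘ Fin.castSucc) j := by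
      intro i j hij
      exact hz i.castSucc j.castSucc (by simpa using hij)
    have hbx : ∀ j : Fin (m+1), b ≠ x j := fun j h => hb ⟨j, h.symm⟩
    rcases ih (x ∘ Fin.castSucc) (z ∘ Fin.castSucc) hx' b hb' hz' with ⟨h1, h2⟩ | ⟨⟨t, ht⟩, i, hi⟩ <;>
      simp only [Function.comp] at *
    · -- σ' b = b
      by_cases hzl : z (Fin.last m) = b
      · right
        refine ⟨⟨Fin.last m, ?_⟩, ⟨Fin.last m, hzl⟩⟩
        rw [hrw]
        simp only [Equiv.Perm.mul_apply]
        rw [h1]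
        rw [hzl, Equiv.swap_apply_right]
      · left
        constructor
        · rw [hrw]
          simp only [Equiv.Perm.mul_apply]
          rw [h1]
          exact Equiv.swap_apply_of_ne_of_ne (hbx _) (Ne.symm hzl)
        · intro i
          rcases Fin.lastCases (motive := fun i => z i ≠ b) hzl (fun j => h2 j) i with h
          exact h
    · -- σ' b = x t.castSucc
      right
      refine ⟨?_, ⟨i.castSucc, hi⟩⟩
      rw [hrw]
      simp only [Equiv.Perm.mul_apply]
      rw [ht]
      by_cases h1 : x t.castSucc = x (Fin.last m)
      · exact absurd (hx h1) (by simp [Fin.ext_iff, Fin.lt_iff_val_lt_val]; omega)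
      by_cases h2 : x t.castSucc = z (Fin.last m)
      · exact ⟨Fin.last m, by rw [h2, Equiv.swap_apply_right]⟩
      · exact ⟨t.castSucc, by rw [Equiv.swap_apply_of_ne_of_ne h1 h2]⟩

/-- For distinct x1,...,x_{k-1}, b outside them, and
σ = (x_{k-1} z_{k-1})···(x1 z1) with z_i ∉ {x_i,...,x_{k-1}}:
σ(b) = b iff all z_i are distinct from b. -/
theorem stmt11 (n m : ℕ) (x z : Fin m → Fin n) (hx : Function.Injective x)
    (b : Fin n) (hb : b ∉ Set.range x)
    (hz : ∀ i j : Fin m, i ≤ j → z i ≠ x j) :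
    ((List.ofFn fun i => Equiv.swap (x i) (z i)).reverse).prod b = b
      ↔ ∀ i : Fin m, z i ≠ b := by
  rcases aux11 n m x z hx b hb hz with ⟨h1, h2⟩ | ⟨⟨t, ht⟩, i, hi⟩
  · simp [h1, h2]
  · constructor
    · intro h; rw [h] at ht; exact absurd ht (fun h' => hb ⟨t, h'.symm⟩)
    · intro h; exact absurd hi (h i)
end

section
/- Let x1, ..., x_{k-1} be distinct elements of [n] and b ∈ [n] \ {x1,...,x_{k-1}}. Let σ = (x_{k-1} z_{k-1})···(x1 z1) where each z_i ∈ [n] \ {x_i,...,x_{k-1}}. If some z_i equals b, then σ(b) ∈ {x1,...,x_{k-1}}. -/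
lemma stmt12_fix (n m : ℕ) (x z : Fin m → Fin n) (b : Fin n) (hb : b ∉ Set.range x)
    (hzb : ∀ i, z i ≠ b) :
    ((List.ofFn fun i => Equiv.swap (x i) (z i)).reverse).prod b = b := by
  induction m with
  | zero => simp
  | succ m ih =>
    rw [List.ofFn_succ', List.concat_eq_append, List.reverse_append]
    simp only [List.reverse_singleton, List.singleton_append, List.prod_cons,
      Equiv.Perm.mul_apply]
    rw [ih (fun i => x i.castSucc) (fun i => z i.castSucc)
        (fun ⟨i, h⟩ => hb ⟨i.castSucc, h⟩) (fun i => hzb i.castSucc)]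
    exact Equiv.swap_apply_of_ne_of_ne
      (fun h => hb ⟨Fin.last m, h.symm⟩) (fun h => hzb (Fin.last m) h.symm)

/-- For distinct x1,...,x_{k-1}, b outside them, and
σ = (x_{k-1} z_{k-1})···(x1 z1) with z_i ∉ {x_i,...,x_{k-1}}:
if some z_i = b then σ(b) ∈ {x1,...,x_{k-1}}. -/
theorem stmt12 (n m : ℕ) (x z : Fin m → Fin n) (hx : Function.Injective x)
    (b : Fin n) (hb : b ∉ Set.range x)
    (hz : ∀ i j : Fin m, i ≤ j → z i ≠ x j)
    (hzb : ∃ i : Fin m, z i = b) :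
    ((List.ofFn fun i => Equiv.swap (x i) (z i)).reverse).prod b ∈ Set.range x := by
  induction m with
  | zero => exact absurd hzb (by simp [Fin.isEmpty'.false])
  | succ m ih =>
    rw [List.ofFn_succ', List.concat_eq_append, List.reverse_append]
    simp only [List.reverse_singleton, List.singleton_append, List.prod_cons,
      Equiv.Perm.mul_apply]
    by_cases h : ∃ i : Fin m, z i.castSucc = b
    · obtain ⟨j, hj⟩ := ih (fun i => x i.castSucc) (fun i => z i.castSucc)
        (fun a b hab => by simpa using hx hab)
        (fun ⟨i, hi⟩ => hb ⟨i.castSucc, hi⟩)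
        (fun i j hij => hz i.castSucc j.castSucc (by simpa using hij)) h
      rw [← hj]; beta_reduce
      rcases eq_or_ne (x j.castSucc) (x (Fin.last m)) with he | he
      · exact absurd (hx he) (by simp [Fin.ext_iff, (j : Fin m).2.ne])
      rcases eq_or_ne (x j.castSucc) (z (Fin.last m)) with he2 | he2
      · rw [← he2, Equiv.swap_apply_right]
        exact ⟨Fin.last m, rfl⟩
      · rw [Equiv.swap_apply_of_ne_of_ne he he2]
        exact ⟨j.castSucc, rfl⟩
    · push_neg at h
      obtain ⟨i, hi⟩ := hzb
      have hlast : z (Fin.last m) = b := by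
        rcases Fin.lastCases (motive := fun i => z i = b → z (Fin.last m) = b)
          (fun h => h) (fun j hj => absurd hj (h j)) i hi with h'
        exact h'
      rw [stmt12_fix n m (fun i => x i.castSucc) (fun i => z i.castSucc)
        b (fun ⟨i, hi⟩ => hb ⟨i.castSucc, hi⟩) h, ← hlast, Equiv.swap_apply_right]
      exact ⟨Fin.last m, rfl⟩
end

section
/- Let x1, ..., x_{k} be distinct elements of [n] with k ≤ n−1, and let π be an n-cycle permutation with π(x_i) = x_{i+1} for i < k. Let λ = (x_k ... x_1) and let σ = (x_{k-1} z_{k-1})···(x_1 z_1) with z_i ∈ [n] \ {x_i,...,x_{k-1}}. Then σ ∘ λ ∘ π is again a single n-cycle on [n]. -/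
open Equiv Equiv.Perm Finset

lemma join_swap {α : Type*} [Fintype α] [DecidableEq α] {f : Equiv.Perm α} {a b : α}
    (hf : f.IsCycle) (hb : f b = b) (ha : f a ≠ a) :
    (Equiv.swap a b * f).IsCycle ∧ (Equiv.swap a b * f).support = insert b f.support := by
  classical
  have hab : a ≠ b := fun h => ha (by rw [h, hb])
  set g : Equiv.Perm α := Equiv.swap a b * f with hg
  have hfb : ∀ y, f y = b → y = b := fun y hy => f.injective (by rw [hy, hb])
  have hgb : g b = a := by simp [hg, Equiv.Perm.mul_apply, hb, Equiv.swap_apply_right]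
  have hgy : ∀ y, f y ≠ y → f y ≠ a → g y = f y := by
    intro y h1 h2
    have hyb : f y ≠ b := fun h => h1 (h.trans ((hfb y h).symm.trans rfl) |>.symm ▸ rfl)
    rw [hg, Equiv.Perm.mul_apply, Equiv.swap_apply_of_ne_of_ne h2 hyb]
  have key : ∀ m : ℕ, ∃ i : ℕ, (g ^ i) b = (f ^ m) a := by
    intro m
    induction m with
    | zero => exact ⟨1, by simpa using hgb⟩
    | succ m ih =>
      obtain ⟨i, hi⟩ := ih
      have hy : f ((f ^ m) a) ≠ (f ^ m) a := by
        have := Equiv.Perm.pow_apply_mem_support (f := f) (n := m) (x := a)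
        rw [Equiv.Perm.mem_support, Equiv.Perm.mem_support] at this
        exact this.mpr ha
      by_cases hfy : f ((f ^ m) a) = a
      · refine ⟨1, ?_⟩
        rw [pow_one, hgb, pow_succ', Equiv.Perm.mul_apply, hfy]
      · refine ⟨i + 1, ?_⟩
        rw [pow_succ', Equiv.Perm.mul_apply, hi, hgy _ hy hfy,
          pow_succ', Equiv.Perm.mul_apply]
  have hgne : ∀ y, f y ≠ y → g y ≠ y := by
    intro y hy
    by_cases hfy : f y = a
    · have hyb : y ≠ b := fun h => hy (by rw [h, hb])
      have : g y = b := by rw [hg, Equiv.Perm.mul_apply, hfy, Equiv.swap_apply_left]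
      rw [this]; exact fun h => hyb h.symm
    · rw [hgy y hy hfy]; exact hy
  constructor
  · refine ⟨b, by rw [hgb]; exact hab, fun y hy => ?_⟩
    by_cases hyb : y = b
    · subst hyb; exact ⟨0, rfl⟩
    · have hfy : f y ≠ y := by
        intro h
        have hya : y ≠ a := fun e => ha (e ▸ h)
        exact hy (by rw [hg, Equiv.Perm.mul_apply, h, Equiv.swap_apply_of_ne_of_ne hya hyb])
      obtain ⟨m, hm⟩ := hf.exists_pow_eq ha hfy
      obtain ⟨i, hi⟩ := key m
      exact ⟨(i : ℤ), by rw [zpow_natCast, hi, hm]⟩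
  · ext y
    simp only [Finset.mem_insert, Equiv.Perm.mem_support]
    constructor
    · intro hy
      by_cases hyb : y = b
      · exact Or.inl hyb
      · right
        intro h
        have hya : y ≠ a := fun e => ha (e ▸ h)
        exact hy (by rw [hg, Equiv.Perm.mul_apply, h, Equiv.swap_apply_of_ne_of_ne hya hyb])
    · rintro (rfl | hy)
      · rw [hgb]; exact hab
      · exact hgne y hy


/-- If π is a single n-cycle with π(x_i) = x_{i+1} for i < k,
λ = (x_k ... x_1), and σ = (x_{k-1} z_{k-1})···(x_1 z_1) with
z_i ∉ {x_i,...,x_{k-1}}, then σ∘λ∘π is again a single n-cycle on [n]. -/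
theorem stmt14 (n k : ℕ) [NeZero k] (hk : k ≤ n - 1)
    (x : Fin k → Fin n) (hx : Function.Injective x)
    (π lam : Equiv.Perm (Fin n))
    (hπc : π.IsCycle) (hπs : π.support = Finset.univ)
    (hπx : ∀ i j : Fin k, (j : ℕ) = (i : ℕ) + 1 → π (x i) = x j)
    (hl1 : ∀ i : Fin k, lam (x i) = x (i - 1))
    (hl2 : ∀ y : Fin n, y ∉ Set.range x → lam y = y)
    (z : Fin k → Fin n)
    (hz : ∀ i j : Fin k, (i : ℕ) < k - 1 → (j : ℕ) < k - 1 → i ≤ j → z i ≠ x j)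
    (σ : Equiv.Perm (Fin n))
    (hσ : σ = ((((List.finRange k).take (k - 1)).map
        fun i => Equiv.swap (x i) (z i)).reverse).prod) :
    (σ * lam * π).IsCycle ∧ (σ * lam * π).support = Finset.univ := by
  classical
  have kpos : 0 < k := NeZero.pos k
  have hkn : k < n := by omega
  set X : ℕ → Fin n := fun m => x ⟨m % k, Nat.mod_lt m kpos⟩ with hXdef
  have hX : ∀ (m : ℕ) (h : m < k), X m = x ⟨m, h⟩ := by
    intro m h
    simp only [hXdef]
    congr 1
    exact Fin.ext (Nat.mod_eq_of_lt h)
  have hXinj : ∀ m1 m2, m1 < k → m2 < k → X m1 = X m2 → m1 = m2 := by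
    intro m1 m2 h1 h2 e
    rw [hX m1 h1, hX m2 h2] at e
    exact congrArg Fin.val (hx e)
  have hπX : ∀ m, m + 1 < k → π (X m) = X (m + 1) := by
    intro m h
    rw [hX m (by omega), hX (m + 1) h]
    exact hπx ⟨m, by omega⟩ ⟨m + 1, h⟩ rfl
  -- the S chain: lam as a product of swaps
  set S : ℕ → Equiv.Perm (Fin n) := fun j =>
    (((List.range j).map fun m => Equiv.swap (X (m + 1)) (X m)).reverse).prod with hSdef
  have hS0 : S 0 = 1 := by simp [hSdef]
  have hSsucc : ∀ j, S (j + 1) = Equiv.swap (X (j + 1)) (X j) * S j := by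
    intro j
    simp [hSdef, List.range_succ]
  have hSfix : ∀ j (y : Fin n), (∀ m, m ≤ j → y ≠ X m) → S j y = y := by
    intro j
    induction j with
    | zero => intro y _; rw [hS0]; rfl
    | succ j ih =>
      intro y hy
      rw [hSsucc, Equiv.Perm.mul_apply, ih y (fun m hm => hy m (by omega)),
        Equiv.swap_apply_of_ne_of_ne (hy (j + 1) le_rfl) (hy j (by omega))]
  have hSvals : ∀ j, j < k →
      (∀ i, 1 ≤ i → i ≤ j → S j (X i) = X (i - 1)) ∧ S j (X 0) = X j := by
    intro j
    induction j with
    | zero => exact fun _ => ⟨fun i h1 h2 => absurd (h1.trans h2) (by omega), by rw [hS0]; rfl⟩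
    | succ j ih =>
      intro h
      obtain ⟨ih1, ih2⟩ := ih (by omega)
      constructor
      · intro i h1 h2
        rw [hSsucc, Equiv.Perm.mul_apply]
        by_cases hij : i = j + 1
        · subst hij
          rw [hSfix j (X (j + 1)) (fun m hm e => by
            have := hXinj _ _ (by omega) (by omega) e; omega)]
          rw [Equiv.swap_apply_left]
          congr 1
        · have hij' : i ≤ j := by omega
          rw [ih1 i h1 hij']
          rw [Equiv.swap_apply_of_ne_of_ne
            (fun e => by have := hXinj _ _ (by omega) (by omega) e; omega)
            (fun e => by have := hXinj _ _ (by omega) (by omega) e; omega)]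
      · rw [hSsucc, Equiv.Perm.mul_apply, ih2, Equiv.swap_apply_right]
  -- the image of X 0 under powers of π
  have hpow : ∀ m, m < k → (π ^ m) (X 0) = X m := by
    intro m
    induction m with
    | zero => intro _; rfl
    | succ m ih =>
      intro h
      rw [pow_succ', Equiv.Perm.mul_apply, ih (by omega), hπX m h]
  -- π (X (k-1)) is outside the range of x
  have hv : ∀ i : Fin k, π (X (k - 1)) ≠ x i := by
    intro i e
    by_cases hi : (i : ℕ) = 0
    · have hi0 : x i = X 0 := by rw [hX 0 kpos]; congr 1; exact Fin.ext hi
      rw [hi0] at e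
      have hπk : (π ^ k) (X 0) = X 0 := by
        conv_lhs => rw [show k = (k - 1) + 1 from by omega]
        rw [pow_succ', Equiv.Perm.mul_apply, hpow (k - 1) (by omega)]
        exact e
      have hmove : π (X 0) ≠ X 0 := by
        rw [← Equiv.Perm.mem_support, hπs]; exact Finset.mem_univ _
      have h1 : π ^ k = 1 := (hπc.pow_eq_one_iff' hmove).mpr hπk
      have h2 : orderOf π ∣ k := orderOf_dvd_of_pow_eq_one h1
      rw [hπc.orderOf, hπs, Finset.card_univ, Fintype.card_fin] at h2
      have := Nat.le_of_dvd kpos h2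
      omega
    · have h1 : 1 ≤ (i : ℕ) := by omega
      have e2 : π (X ((i : ℕ) - 1)) = x i := by
        rw [hX _ (by omega)]
        exact hπx ⟨(i : ℕ) - 1, by omega⟩ i (by show (i : ℕ) = (i : ℕ) - 1 + 1; omega)
      rw [← e2] at e
      have hik : (i : ℕ) < k := i.isLt
      have := hXinj _ _ (by omega) (by omega) (π.injective e)
      omega
  have hvX : ∀ m, m < k → π (X (k - 1)) ≠ X m := fun m hm e =>
    hv ⟨m, hm⟩ (by rwa [hX m hm] at e)
  -- Q chain: splitting off fixed points
  have hQ : ∀ j, j ≤ k - 1 → (S j * π).IsCycle ∧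
      (S j * π).support = Finset.univ \ (Finset.range j).image X := by
    intro j
    induction j with
    | zero =>
      intro _
      rw [hS0, one_mul]
      exact ⟨hπc, by simp [hπs]⟩
    | succ j ih =>
      intro h
      obtain ⟨hc, hs⟩ := ih (by omega)
      have hQj : (S j * π) (X j) = X (j + 1) := by
        rw [Equiv.Perm.mul_apply, hπX j (by omega)]
        exact hSfix j (X (j + 1)) (fun m hm e => by
          have := hXinj _ _ (by omega) (by omega) e; omega)
      have hQj2 : (S j * π) (X (j + 1)) ≠ X j := by
        rw [Equiv.Perm.mul_apply]
        by_cases hj2 : j + 2 < k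
        · rw [hπX (j + 1) hj2, hSfix j (X (j + 2)) (fun m hm e => by
            have := hXinj _ _ (by omega) (by omega) e; omega)]
          exact fun e => by have := hXinj _ _ (by omega) (by omega) e; omega
        · have hj1 : j + 1 = k - 1 := by omega
          rw [show X (j + 1) = X (k - 1) by rw [hj1]]
          rw [hSfix j (π (X (k - 1))) (fun m hm => hvX m (by omega))]
          exact hvX j (by omega)
      have hne : (S j * π) (X j) ≠ X j := by
        rw [hQj]
        exact fun e => by have := hXinj _ _ (by omega) (by omega) e; omega
      have hne2 : (S j * π) ((S j * π) (X j)) ≠ X j := by rw [hQj]; exact hQj2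
      have key : Equiv.swap (X (j + 1)) (X j) = Equiv.swap (X j) ((S j * π) (X j)) := by
        rw [hQj, Equiv.swap_comm]
      constructor
      · rw [hSsucc, mul_assoc, key]
        exact hc.swap_mul hne hne2
      · rw [hSsucc, mul_assoc, key, Equiv.Perm.support_swap_mul_eq _ _ hne2, hs,
          Finset.range_add_one, Finset.image_insert, Finset.sdiff_insert, Finset.erase_eq]
  -- identify lam with S (k-1)
  have hsub : ∀ i : Fin k, ((i - 1 : Fin k) : ℕ) =
      if (i : ℕ) = 0 then k - 1 else (i : ℕ) - 1 := by
    intro i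
    rcases Nat.lt_or_ge 1 k with hk2 | hk2
    · rw [Fin.sub_def]
      simp only [Fin.val_mk]
      have h1 : ((1 : Fin k) : ℕ) = 1 % k := Fin.val_one' k
      rw [h1, Nat.mod_eq_of_lt hk2]
      by_cases hi : (i : ℕ) = 0
      · rw [hi, if_pos rfl]
        simpa using Nat.mod_eq_of_lt (show k - 1 < k by omega)
      · rw [if_neg hi]
        have hik : (i : ℕ) < k := i.isLt
        have h2 : (k - 1) + (i : ℕ) = k + ((i : ℕ) - 1) := by omega
        rw [h2, Nat.add_mod_left, Nat.mod_eq_of_lt (by omega)]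
    · have hk1 : k = 1 := by omega
      subst hk1
      rw [Fin.eq_zero i, Fin.eq_zero (0 - 1 : Fin 1)]
      simp
  have hlam : lam = S (k - 1) := by
    apply Equiv.ext
    intro y
    by_cases hy : y ∈ Set.range x
    · obtain ⟨i, rfl⟩ := hy
      rw [hl1 i]
      by_cases hi : (i : ℕ) = 0
      · have hxi : x i = X 0 := by
          rw [hX 0 kpos]; congr 1; exact Fin.ext hi
        have harg : (i - 1 : Fin k) = ⟨k - 1, by omega⟩ :=
          Fin.ext (by rw [hsub i]; simp [hi])
        rw [hxi, (hSvals (k - 1) (by omega)).2, hX (k - 1) (by omega), harg]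
      · have hxi : x i = X (i : ℕ) := by rw [hX _ i.isLt]
        have hik : (i : ℕ) < k := i.isLt
        have harg : (i - 1 : Fin k) = ⟨(i : ℕ) - 1, by omega⟩ :=
          Fin.ext (by rw [hsub i]; simp [hi])
        rw [hxi, (hSvals (k - 1) (by omega)).1 (i : ℕ) (by omega) (by omega),
          hX _ (by omega), harg]
    · rw [hl2 y hy]
      refine (hSfix (k - 1) y (fun m hm e => ?_)).symm
      exact hy ⟨⟨m, by omega⟩, by rw [← hX m (by omega)]; exact e.symm⟩
  -- T chain: rejoining the fixed points
  set T : ℕ → Equiv.Perm (Fin n) := fun m =>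
    ((((List.finRange k).take m).map fun i => Equiv.swap (x i) (z i)).reverse).prod with hTdef
  have hT0 : T 0 = 1 := by simp [hTdef]
  have hTsucc : ∀ (m : ℕ) (h : m < k),
      T (m + 1) = Equiv.swap (x ⟨m, h⟩) (z ⟨m, h⟩) * T m := by
    intro m h
    have hget : (List.finRange k)[m]? = some ⟨m, h⟩ := by
      rw [List.getElem?_eq_getElem (by simpa using h)]
      simp
    simp [hTdef, List.take_succ, hget]
  have hR : ∀ m, m ≤ k - 1 → (T m * (S (k - 1) * π)).IsCycle ∧
      (T m * (S (k - 1) * π)).support =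
        Finset.univ \ (Finset.Ico m (k - 1)).image X := by
    intro m
    induction m with
    | zero =>
      intro _
      rw [hT0, one_mul]
      obtain ⟨hc, hs⟩ := hQ (k - 1) le_rfl
      exact ⟨hc, by rw [hs, Finset.range_eq_Ico]⟩
    | succ m ih =>
      intro h
      obtain ⟨hc, hs⟩ := ih (by omega)
      have hmk : m < k := by omega
      set f := T m * (S (k - 1) * π) with hfdef
      have hxm : x ⟨m, hmk⟩ = X m := (hX m hmk).symm
      have hb : f (x ⟨m, hmk⟩) = x ⟨m, hmk⟩ := by
        have : x ⟨m, hmk⟩ ∉ f.support := by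
          rw [hs, Finset.mem_sdiff]
          rintro ⟨-, hmem⟩
          exact hmem (Finset.mem_image.mpr ⟨m, Finset.mem_Ico.mpr ⟨le_rfl, by omega⟩, hxm.symm⟩)
        exact Equiv.Perm.notMem_support.mp this
      have ha : f (z ⟨m, hmk⟩) ≠ z ⟨m, hmk⟩ := by
        rw [← Equiv.Perm.mem_support, hs, Finset.mem_sdiff]
        refine ⟨Finset.mem_univ _, fun hmem => ?_⟩
        obtain ⟨j, hj, e⟩ := Finset.mem_image.mp hmem
        obtain ⟨hj1, hj2⟩ := Finset.mem_Ico.mp hj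
        refine hz ⟨m, hmk⟩ ⟨j, by omega⟩ (by simpa using (by omega : m < k - 1))
          (by simpa using (by omega : j < k - 1)) (by simpa [Fin.le_def] using hj1) ?_
        rw [← hX j (by omega)]
        exact e.symm
      have hjoin := join_swap hc hb ha
      have hswap : Equiv.swap (x ⟨m, hmk⟩) (z ⟨m, hmk⟩)
          = Equiv.swap (z ⟨m, hmk⟩) (x ⟨m, hmk⟩) := Equiv.swap_comm _ _
      constructor
      · rw [hTsucc m hmk, mul_assoc, ← hfdef, hswap]
        exact hjoin.1
      · rw [hTsucc m hmk, mul_assoc, ← hfdef, hswap, hjoin.2, hs, hxm]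
        ext y
        simp only [Finset.mem_insert, Finset.mem_sdiff, Finset.mem_univ, true_and,
          Finset.mem_image, Finset.mem_Ico, not_exists, not_and]
        constructor
        · rintro (rfl | hy)
          · intro j hj e
            have := hXinj _ _ (by omega) (by omega) e
            omega
          · intro j hj e
            exact hy j ⟨by omega, hj.2⟩ e
        · intro hy
          by_cases hym : y = X m
          · exact Or.inl hym
          · refine Or.inr fun j hj e => ?_
            rcases Nat.eq_or_lt_of_le hj.1 with rfl | hj1
            · exact hym e.symm
            · exact hy j ⟨hj1, hj.2⟩ e
      -- end succ
  obtain ⟨hc, hs⟩ := hR (k - 1) le_rfl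
  have hσT : σ = T (k - 1) := hσ
  rw [hσT, hlam, mul_assoc]
  refine ⟨hc, ?_⟩
  rw [hs]
  simp
end

section
/- Let e = {x1,...,xs} and e' be s-element subsets of [n] with e ∩ e' = ∅, and let M be a perfect matching of the complete s-uniform hypergraph containing both e and e' (with x1 < ... < xs). Let σ = (x2 z2)···(xs zs) with z_i ∈ [n] \ {x1,...,x_i} for each i. Then e' ∈ σ·M if and only if z_i ∉ e' for all i = 2,...,s. -/
private lemma prodfix18 {α : Type*} :
    ∀ (L : List (Equiv.Perm α)) (v : α), (∀ g ∈ L, g v = v) → L.prod v = v := by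
  intro L
  induction L with
  | nil => intro v _; simp
  | cons a t ih =>
      intro v h
      rw [List.prod_cons, Equiv.Perm.mul_apply,
        ih v fun g hg => h g (List.mem_cons_of_mem _ hg), h a (List.mem_cons_self)]

private lemma invprod18 {α : Type*} :
    ∀ (L : List (Equiv.Perm α)), (∀ g ∈ L, g⁻¹ = g) → (L.prod)⁻¹ = L.reverse.prod := by
  intro L
  induction L with
  | nil => simp
  | cons a t ih =>
      intro h
      rw [List.prod_cons, mul_inv_rev, ih fun g hg => h g (List.mem_cons_of_mem _ hg),
        List.reverse_cons, List.prod_append, List.prod_singleton,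
        h a (List.mem_cons_self)]

/-- For a perfect matching M of the complete s-uniform hypergraph on [n]
containing disjoint edges e = {x1 < ... < xs} and e', and
σ = (x2 z2)···(xs zs) with z_i ∉ {x1,...,x_i}: e' ∈ σ·M iff z_i ∉ e' for all
i = 2,...,s. -/
theorem stmt18 (n s : ℕ) (M : Finset (Finset (Fin n)))
    (hMs : ∀ f ∈ M, f.card = s)
    (hMcov : ∀ v : Fin n, ∃! f, f ∈ M ∧ v ∈ f)
    (x : Fin s → Fin n) (hx : StrictMono x)
    (e' : Finset (Fin n))
    (he : Finset.image x Finset.univ ∈ M) (he' : e' ∈ M)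
    (hdisj : Disjoint (Finset.image x Finset.univ) e')
    (z : Fin s → Fin n)
    (hz : ∀ i j : Fin s, 1 ≤ (i : ℕ) → j ≤ i → z i ≠ x j) :
    (e' ∈ M.image fun f =>
        f.image ⇑((((List.finRange s).drop 1).map fun i => Equiv.swap (x i) (z i)).prod))
    ↔ ∀ i : Fin s, 1 ≤ (i : ℕ) → z i ∉ e' := by
  classical
  set sw : Fin s → Equiv.Perm (Fin n) := fun i => Equiv.swap (x i) (z i) with hswdef
  set l : List (Fin s) := (List.finRange s).drop 1 with hldef
  have hl_one : ∀ i ∈ l, 1 ≤ (i : ℕ) := by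
    intro i hi
    rw [hldef] at hi
    match s, i, hi with
    | (k+1), i, hi =>
      rw [List.finRange_succ, List.drop_succ_cons, List.drop_zero] at hi
      obtain ⟨j, _, rfl⟩ := List.mem_map.mp hi
      simp [Fin.val_succ]
  have hl_mem : ∀ i : Fin s, 1 ≤ (i : ℕ) → i ∈ l := by
    intro i hi
    rw [hldef]
    match s, i, hi with
    | (k+1), i, hi =>
      rw [List.finRange_succ, List.drop_succ_cons, List.drop_zero, List.mem_map]
      have hne : i ≠ 0 := by
        intro h; rw [h] at hi; simp at hi
      exact ⟨i.pred hne, List.mem_finRange _, Fin.succ_pred _ _⟩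
  have hl_pw : l.Pairwise (· < ·) := (List.pairwise_lt_finRange s).drop
  have hxne : ∀ v ∈ e', ∀ j : Fin s, v ≠ x j := by
    intro v hv j h
    exact Finset.disjoint_left.mp hdisj
      (Finset.mem_image.mpr ⟨j, Finset.mem_univ _, h.symm⟩) hv
  -- key tracking lemma
  have move : ∀ (L : List (Fin s)) (v : Fin n), L.Pairwise (· < ·) →
      (∀ i ∈ L, 1 ≤ (i : ℕ)) → (∀ j : Fin s, v ≠ x j) → (∃ i ∈ L, z i = v) →
      ∃ j : Fin s, ((L.map sw).reverse.prod) v = x j := by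
    intro L
    induction L with
    | nil => simp
    | cons a t ih =>
      intro v hpw hone hvx hex
      have hstep : (((a :: t).map sw).reverse).prod v = ((t.map sw).reverse.prod) (sw a v) := by
        simp [List.reverse_cons, List.prod_append, Equiv.Perm.mul_apply]
      by_cases hva : z a = v
      · refine ⟨a, ?_⟩
        rw [hstep]
        have h1 : sw a v = x a := by
          rw [hswdef]; simp only []; rw [← hva]; exact Equiv.swap_apply_right _ _
        rw [h1]
        apply prodfix18
        intro g hg
        simp only [List.mem_reverse, List.mem_map] at hg
        obtain ⟨i, hi, rfl⟩ := hg
        have hai : a < i := (List.pairwise_cons.mp hpw).1 i hi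
        have hone' : 1 ≤ (i : ℕ) := hone i (List.mem_cons_of_mem _ hi)
        exact Equiv.swap_apply_of_ne_of_ne
          (fun h => absurd (hx.injective h) (ne_of_lt hai))
          (fun h => (hz i a hone' (le_of_lt hai)) h.symm)
      · have hsw2 : sw a v = v :=
          Equiv.swap_apply_of_ne_of_ne (hvx a) (fun h => hva h.symm)
        rw [hstep, hsw2]
        obtain ⟨i, hi, hzi⟩ := hex
        rcases List.mem_cons.mp hi with rfl | hit
        · exact absurd hzi hva
        · exact ih v hpw.of_cons (fun j hj => hone j (List.mem_cons_of_mem _ hj)) hvx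
            ⟨i, hit, hzi⟩
  have hinv : ((l.map sw).prod)⁻¹ = (l.map sw).reverse.prod := by
    apply invprod18
    intro g hg
    obtain ⟨i, _, rfl⟩ := List.mem_map.mp hg
    exact Equiv.swap_inv _ _
  constructor
  · intro hmem i hi1 hzie'
    obtain ⟨f, hfM, hfe⟩ := Finset.mem_image.mp hmem
    -- σ⁻¹ (z i) ∈ f and equals some x j
    obtain ⟨u, huf, hu⟩ := Finset.mem_image.mp (hfe ▸ hzie' : z i ∈ f.image _)
    obtain ⟨j, hj⟩ := move l (z i) hl_pw hl_one (hxne _ hzie') ⟨i, hl_mem i hi1, rfl⟩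
    have hu2 : u = x j := by
      have : ((l.map sw).prod)⁻¹ ((l.map sw).prod u) = ((l.map sw).prod)⁻¹ (z i) := by
        rw [hu]
      rwa [show ∀ (p : Equiv.Perm (Fin n)) (y : Fin n), p⁻¹ (p y) = y from fun p y => by simp, hinv, hj] at this
    -- f and e both contain x j, so f = e
    have hxjf : x j ∈ f := hu2 ▸ huf
    have hxje : x j ∈ Finset.image x Finset.univ :=
      Finset.mem_image.mpr ⟨j, Finset.mem_univ _, rfl⟩
    obtain ⟨g, -, hg⟩ := hMcov (x j)
    have hfeq : f = Finset.image x Finset.univ :=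
      (hg f ⟨hfM, hxjf⟩).trans (hg _ ⟨he, hxje⟩).symm
    -- then x 0 ∈ e' : contradiction with disjointness
    have hpos : 0 < s := i.pos
    set x0 : Fin n := x ⟨0, hpos⟩ with hx0def
    have hfix : (l.map sw).prod x0 = x0 := by
      apply prodfix18
      intro g' hg'
      obtain ⟨k, hk, rfl⟩ := List.mem_map.mp hg'
      have hk1 : 1 ≤ (k : ℕ) := hl_one k hk
      refine Equiv.swap_apply_of_ne_of_ne ?_ ?_
      · intro h
        have := hx.injective h.symm
        rw [this] at hk1; simp at hk1
      · exact fun h => (hz k ⟨0, hpos⟩ hk1 (by simp [Fin.le_def])) h.symm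
    have hx0f : x0 ∈ f := by
      rw [hfeq]; exact Finset.mem_image.mpr ⟨_, Finset.mem_univ _, rfl⟩
    have hx0e' : x0 ∈ e' := by
      rw [← hfe]
      exact Finset.mem_image.mpr ⟨x0, hx0f, hfix⟩
    exact hxne x0 hx0e' ⟨0, hpos⟩ rfl
  · intro h
    refine Finset.mem_image.mpr ⟨e', he', ?_⟩
    have hfix : ∀ v ∈ e', (l.map sw).prod v = v := by
      intro v hv
      apply prodfix18
      intro g hg
      obtain ⟨k, hk, rfl⟩ := List.mem_map.mp hg
      exact Equiv.swap_apply_of_ne_of_ne (hxne v hv k)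
        (fun heq => (h k (hl_one k hk)) (heq ▸ hv))
    rw [Finset.image_congr (g := id) (fun v hv => hfix v hv), Finset.image_id]
end
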